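/- Fix α ∈ (0,1/2), δ ∈ (0,1), integers 1 ≤ N_P < N_A, and a real μ_gap satisfying μ_gap ≥ 3·√(2·log(1/δ)) + 7·√(2·log(e·N_A/N_P)) + π/(2·N_P). Let X_1, …, X_{N_A} be independent standard Gaussians (no true improvement, μ = 0). Then with probability at least 1 − δ, for every subset S ⊆ {1,…,N_A} of size N_P, writing μ̂_S = (1/N_P)·Σ_{i∈S} X_i, one has Φ̄((μ̂_S − μ_gap)·√N_P) > α; that is, no choice of published datasets can achieve p-value at most α for the minimum-innovation test with gap μ_gap. -/

import Mathlib

set_option maxHeartbeats 1000000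

open MeasureTheory ProbabilityTheory

section Aux
open Real

lemma pdf_mul_exp (t x : ℝ) : gaussianPDFReal 0 1 x * Real.exp (t * x)
    = (Real.sqrt (2 * π))⁻¹ * Real.exp (t ^ 2 / 2) * Real.exp (-(1/2) * (x - t) ^ 2) := by
  simp only [gaussianPDFReal, NNReal.coe_one, mul_one, sub_zero]
  rw [mul_assoc, ← Real.exp_add, mul_assoc, ← Real.exp_add]
  congr 1
  rw [Real.exp_eq_exp]
  ring

lemma int_aux (t : ℝ) :
    Integrable (fun x : ℝ => gaussianPDFReal 0 1 x * Real.exp (t * x)) := by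
  simp_rw [pdf_mul_exp]
  exact ((integrable_exp_neg_mul_sq (by norm_num : (0:ℝ) < 1/2)).comp_sub_right t).const_mul _

lemma intval_aux (t : ℝ) :
    ∫ x : ℝ, gaussianPDFReal 0 1 x * Real.exp (t * x) = Real.exp (t ^ 2 / 2) := by
  simp_rw [pdf_mul_exp]
  rw [integral_const_mul, integral_sub_right_eq_self (μ := volume)
    (fun x => Real.exp (-(1/2) * x ^ 2)) t, integral_gaussian]
  rw [show π / (1/2 : ℝ) = 2 * π by ring]
  rw [mul_right_comm, inv_mul_cancel₀ (by positivity), one_mul]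

lemma gr_eq : gaussianReal 0 1 = (volume : Measure ℝ).withDensity
    (fun x => ((gaussianPDFReal 0 1 x).toNNReal : ENNReal)) := by
  rw [gaussianReal_of_var_ne_zero 0 one_ne_zero]
  rfl

lemma int_gr (t : ℝ) : Integrable (fun x : ℝ => Real.exp (t * x)) (gaussianReal 0 1) := by
  rw [gr_eq, integrable_withDensity_iff_integrable_smul
    ((measurable_gaussianPDFReal 0 1).real_toNNReal)]
  have h : ∀ x : ℝ, (gaussianPDFReal 0 1 x).toNNReal • Real.exp (t * x)
      = gaussianPDFReal 0 1 x * Real.exp (t * x) := by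
    intro x
    rw [NNReal.smul_def, Real.coe_toNNReal _ (gaussianPDFReal_nonneg 0 1 x), smul_eq_mul]
  simp_rw [h]
  exact int_aux t

lemma intval_gr (t : ℝ) :
    ∫ x, Real.exp (t * x) ∂(gaussianReal 0 1) = Real.exp (t ^ 2 / 2) := by
  rw [gr_eq, integral_withDensity_eq_integral_smul
    ((measurable_gaussianPDFReal 0 1).real_toNNReal)]
  have h : ∀ x : ℝ, (gaussianPDFReal 0 1 x).toNNReal • Real.exp (t * x)
      = gaussianPDFReal 0 1 x * Real.exp (t * x) := by
    intro x
    rw [NNReal.smul_def, Real.coe_toNNReal _ (gaussianPDFReal_nonneg 0 1 x), smul_eq_mul]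
  simp_rw [h]
  exact intval_aux t

variable {Ω : Type*} [MeasureSpace Ω]

lemma int_X {X : Ω → ℝ} (hm : Measurable X) (hd : Measure.map X ℙ = gaussianReal 0 1) (t : ℝ) :
    Integrable (fun ω => Real.exp (t * X ω)) ℙ := by
  have := (int_gr t)
  rw [← hd] at this
  exact (integrable_map_measure (Real.measurable_exp.comp
    (measurable_id.const_mul t)).aestronglyMeasurable hm.aemeasurable).mp this

lemma mgf_X {X : Ω → ℝ} (hm : Measurable X) (hd : Measure.map X ℙ = gaussianReal 0 1) (t : ℝ) :
    mgf X ℙ t = Real.exp (t ^ 2 / 2) := by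
  have h := integral_map (φ := X) (μ := ℙ) hm.aemeasurable
    (f := fun x => Real.exp (t * x))
    (Real.measurable_exp.comp (measurable_id.const_mul t)).aestronglyMeasurable
  rw [hd, intval_gr] at h
  rw [mgf, ← h]

end Aux

/-- The standard normal survival function `Φ̄(x) = ∫_x^∞ (1/√(2π)) exp(-t²/2) dt`. -/
noncomputable def Phibar (x : ℝ) : ℝ :=
  ∫ t in Set.Ioi x, (Real.sqrt (2 * Real.pi))⁻¹ * Real.exp (-t ^ 2 / 2)

section Phi
open Real

lemma phif_eq : (fun t : ℝ => (Real.sqrt (2 * Real.pi))⁻¹ * Real.exp (-t ^ 2 / 2))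
    = fun t : ℝ => (Real.sqrt (2 * Real.pi))⁻¹ * Real.exp (-(1/2) * t ^ 2) := by
  funext t; congr 1; congr 1; ring

lemma phif_integrable : Integrable
    (fun t : ℝ => (Real.sqrt (2 * Real.pi))⁻¹ * Real.exp (-t ^ 2 / 2)) := by
  rw [phif_eq]
  exact (integrable_exp_neg_mul_sq (by norm_num : (0:ℝ) < 1/2)).const_mul _

lemma Phibar_zero : Phibar 0 = 1 / 2 := by
  rw [Phibar, phif_eq, MeasureTheory.integral_const_mul, integral_gaussian_Ioi]
  rw [show π / (1/2 : ℝ) = 2 * π by ring]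
  rw [show (√(2 * π))⁻¹ * (√(2*π)/2) = (√(2*π))⁻¹ * √(2*π) * (1/2) by ring,
    inv_mul_cancel₀ (by positivity), one_mul]

lemma Phibar_ge_half {x : ℝ} (hx : x ≤ 0) : 1 / 2 ≤ Phibar x := by
  rw [← Phibar_zero]
  apply MeasureTheory.setIntegral_mono_set phif_integrable.integrableOn
  · filter_upwards with t using by positivity
  · exact HasSubset.Subset.eventuallyLE (Set.Ioi_subset_Ioi hx)

lemma numeric {δ μgap : ℝ} (hδ0 : 0 < δ) (hδ1 : δ < 1) {NP NA : ℕ}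
    (hNP : 1 ≤ NP) (hlt : NP < NA)
    (hgap : μgap ≥ 3 * Real.sqrt (2 * Real.log (1 / δ)) +
      7 * Real.sqrt (2 * Real.log (Real.exp 1 * NA / NP)) + Real.pi / (2 * NP)) :
    (NA.choose NP : ℝ) * Real.exp (-((NP : ℝ) * μgap ^ 2 / 2)) ≤ δ := by
  have hNPr : (1:ℝ) ≤ NP := by exact_mod_cast hNP
  have hNPpos : (0:ℝ) < NP := by linarith
  have hNAr : (NP:ℝ) < NA := by exact_mod_cast hlt
  have hNApos : (0:ℝ) < NA := by linarith
  have hfac : (0:ℝ) < NP.factorial := by exact_mod_cast NP.factorial_pos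
  set L1 := Real.log (1 / δ) with hL1def
  set L2 := Real.log (Real.exp 1 * NA / NP) with hL2def
  have hL1 : 0 ≤ L1 := Real.log_nonneg (one_le_one_div hδ0 hδ1.le)
  have he1 : (1:ℝ) ≤ Real.exp 1 := by nlinarith [Real.add_one_le_exp (1:ℝ)]
  have hratio : (1:ℝ) ≤ (NA:ℝ) / NP := by
    rw [le_div_iff₀ hNPpos, one_mul]; linarith
  have hbase : (1:ℝ) ≤ Real.exp 1 * NA / NP := by
    rw [mul_div_assoc]
    nlinarith
  have hbasepos : (0:ℝ) < Real.exp 1 * NA / NP := by linarith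
  have hL2 : 0 ≤ L2 := Real.log_nonneg hbase
  -- factorial bound : NP^NP ≤ exp NP * NP!
  have key1 : ((NP:ℝ))^NP / NP.factorial ≤ Real.exp NP := by
    have h := Real.sum_le_exp_of_nonneg (x := (NP:ℝ)) (by positivity) (NP+1)
    have h2 : ((NP:ℝ))^NP / NP.factorial
        ≤ ∑ i ∈ Finset.range (NP+1), (NP:ℝ)^i / i.factorial :=
      Finset.single_le_sum (f := fun i => (NP:ℝ)^i / i.factorial)
        (fun i _ => by positivity) (Finset.self_mem_range_succ NP)
    linarith
  have key1' : ((NP:ℝ))^NP ≤ Real.exp NP * NP.factorial := by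
    rw [div_le_iff₀ hfac] at key1; linarith
  -- choose bound
  have key2 : (NA.choose NP : ℝ) ≤ (Real.exp 1 * NA / NP)^NP := by
    have h1 : (NA.choose NP : ℝ) ≤ (NA:ℝ)^NP / NP.factorial := Nat.choose_le_pow_div NP NA
    have hexp : (Real.exp 1 * NA / NP)^NP
        = (Real.exp NP * (NA:ℝ)^NP) / (NP:ℝ)^NP := by
      rw [div_pow, mul_pow, ← Real.exp_nat_mul, mul_one]
    have hNA0 : (0:ℝ) ≤ (NA:ℝ)^NP := by positivity
    have hNPP : (0:ℝ) < (NP:ℝ)^NP := by positivity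
    have h2 : (NA:ℝ)^NP / NP.factorial ≤ (Real.exp NP * (NA:ℝ)^NP) / (NP:ℝ)^NP := by
      rw [div_le_div_iff₀ hfac hNPP]
      nlinarith [mul_le_mul_of_nonneg_left key1' hNA0]
    rw [hexp]
    linarith
  have key3 : (Real.exp 1 * NA / NP)^NP = Real.exp (NP * L2) := by
    rw [Real.exp_nat_mul, Real.exp_log hbasepos]
  -- gap arithmetic
  set a := Real.sqrt (2 * L1) with hadef
  set b := Real.sqrt (2 * L2) with hbdef
  have ha : 0 ≤ a := Real.sqrt_nonneg _
  have hb : 0 ≤ b := Real.sqrt_nonneg _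
  have ha2 : a^2 = 2 * L1 := Real.sq_sqrt (by linarith)
  have hb2 : b^2 = 2 * L2 := Real.sq_sqrt (by linarith)
  have hcpos : 0 < Real.pi / (2 * NP) := by positivity
  have hgap' : 3*a + 7*b ≤ μgap := by linarith [hgap]
  have hsq : (3*a + 7*b)^2 ≤ μgap^2 :=
    pow_le_pow_left₀ (by linarith) hgap' 2
  have harith : L1 + (NP:ℝ) * L2 ≤ (NP:ℝ) * μgap^2 / 2 := by
    have h18 : 18*L1 + 98*L2 ≤ μgap^2 := by nlinarith [mul_nonneg ha hb]
    nlinarith [mul_nonneg (sub_nonneg.mpr hNPr) hL1, mul_nonneg (sub_nonneg.mpr hNPr) hL2,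
      mul_le_mul_of_nonneg_left h18 hNPpos.le]
  -- final chain
  have hlogδ : Real.log δ = -L1 := by rw [hL1def, one_div, Real.log_inv, neg_neg]
  calc (NA.choose NP : ℝ) * Real.exp (-((NP : ℝ) * μgap ^ 2 / 2))
      ≤ Real.exp ((NP:ℝ) * L2) * Real.exp (-((NP : ℝ) * μgap ^ 2 / 2)) := by
        apply mul_le_mul_of_nonneg_right _ (Real.exp_nonneg _)
        calc (NA.choose NP : ℝ) ≤ (Real.exp 1 * NA / NP)^NP := key2
          _ = Real.exp ((NP:ℝ) * L2) := key3
    _ = Real.exp ((NP:ℝ) * L2 - (NP:ℝ) * μgap^2/2) := by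
        rw [← Real.exp_add, Real.exp_eq_exp]; ring
    _ ≤ Real.exp (Real.log δ) := by
        apply Real.exp_le_exp.mpr
        rw [hlogδ]; linarith
    _ = δ := Real.exp_log hδ0

end Phi

/-- If the minimum-innovation gap `μ_gap` is at least
`3√(2 log(1/δ)) + 7√(2 log(e N_A/N_P)) + π/(2 N_P)`, then with probability at least `1 - δ`
no subset of `N_P` of the `N_A` i.i.d. standard Gaussian results (no true improvement)
achieves a minimum-innovation `p`-value at most `α`. -/
theorem stmt3 {Ω : Type*} [MeasureSpace Ω] [IsProbabilityMeasure (ℙ : Measure Ω)]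
    (α δ μgap : ℝ) (hα : α ∈ Set.Ioo (0 : ℝ) (1 / 2)) (hδ : δ ∈ Set.Ioo (0 : ℝ) 1)
    (NP NA : ℕ) (hNP : 1 ≤ NP) (hlt : NP < NA)
    (hgap : μgap ≥ 3 * Real.sqrt (2 * Real.log (1 / δ)) +
      7 * Real.sqrt (2 * Real.log (Real.exp 1 * NA / NP)) + Real.pi / (2 * NP))
    (X : Fin NA → Ω → ℝ) (hmeas : ∀ i, Measurable (X i))
    (hindep : iIndepFun X ℙ)
    (hdist : ∀ i, Measure.map (X i) ℙ = gaussianReal 0 1) :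
    ENNReal.ofReal (1 - δ) ≤
      ℙ {ω | ∀ S : Finset (Fin NA), S.card = NP →
        Phibar (((1 / (NP : ℝ)) * ∑ i ∈ S, X i ω - μgap) * Real.sqrt NP) > α} := by
  obtain ⟨hα0, hα2⟩ := hα
  obtain ⟨hδ0, hδ1⟩ := hδ
  have hNPr : (1:ℝ) ≤ NP := by exact_mod_cast hNP
  have hNPpos : (0:ℝ) < NP := by linarith
  have hgap0 : 0 ≤ μgap := by
    have h1 := Real.sqrt_nonneg (2 * Real.log (1/δ))
    have h2 := Real.sqrt_nonneg (2 * Real.log (Real.exp 1 * NA / NP))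
    have h3 : 0 < Real.pi / (2 * (NP:ℝ)) := by positivity
    linarith
  set P := Finset.powersetCard NP (Finset.univ : Finset (Fin NA)) with hP
  set bad : Finset (Fin NA) → Set Ω := fun S => {ω | (NP:ℝ) * μgap ≤ ∑ i ∈ S, X i ω} with hbad
  have hmeasbad : ∀ S : Finset (Fin NA), MeasurableSet (bad S) := fun S =>
    measurableSet_le measurable_const (Finset.measurable_sum S fun i _ => hmeas i)
  have hcher : ∀ S ∈ P, ℙ (bad S) ≤ ENNReal.ofReal (Real.exp (-((NP:ℝ) * μgap^2/2))) := by
    intro S hS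
    rw [hP, Finset.mem_powersetCard_univ] at hS
    have h_int : ∀ i ∈ S, Integrable (fun ω => Real.exp (μgap * X i ω)) ℙ :=
      fun i _ => int_X (hmeas i) (hdist i) μgap
    have hsum_int := hindep.integrable_exp_mul_sum hmeas h_int
    have h := measure_ge_le_exp_mul_mgf (X := ∑ i ∈ S, X i) (μ := ℙ) (t := μgap)
      ((NP:ℝ)*μgap) hgap0 hsum_int
    rw [hindep.mgf_sum hmeas S] at h
    have hprod : ∏ i ∈ S, mgf (X i) ℙ μgap = Real.exp (μgap^2/2) ^ NP := by
      rw [Finset.prod_congr rfl fun i _ => mgf_X (hmeas i) (hdist i) μgap,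
        Finset.prod_const, hS]
    rw [hprod] at h
    have h2 : Real.exp (-μgap * ((NP:ℝ)*μgap)) * Real.exp (μgap^2/2)^NP
        = Real.exp (-((NP:ℝ)*μgap^2/2)) := by
      rw [← Real.exp_nat_mul, ← Real.exp_add, Real.exp_eq_exp]; ring
    rw [h2] at h
    have hset : {ω | (NP:ℝ)*μgap ≤ (∑ i ∈ S, X i) ω} = bad S := by
      ext ω; simp [hbad, Finset.sum_apply]
    rw [hset] at h
    exact (ENNReal.le_ofReal_iff_toReal_le (measure_ne_top _ _) (Real.exp_nonneg _)).mpr h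
  have hunion : ℙ (⋃ S ∈ P, bad S) ≤ ENNReal.ofReal δ := by
    have u1 : ℙ (⋃ S ∈ P, bad S) ≤ ∑ S ∈ P, ℙ (bad S) := measure_biUnion_finset_le P bad
    have u2 : ∑ S ∈ P, ℙ (bad S)
        ≤ ∑ _S ∈ P, ENNReal.ofReal (Real.exp (-((NP:ℝ) * μgap^2/2))) :=
      Finset.sum_le_sum hcher
    have u3 : ∑ _S ∈ P, ENNReal.ofReal (Real.exp (-((NP:ℝ) * μgap^2/2)))
        = (P.card : ENNReal) * ENNReal.ofReal (Real.exp (-((NP:ℝ)*μgap^2/2))) := by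
      rw [Finset.sum_const, nsmul_eq_mul]
    have u4 : (P.card : ENNReal) * ENNReal.ofReal (Real.exp (-((NP:ℝ)*μgap^2/2)))
        = ENNReal.ofReal ((NA.choose NP : ℝ) * Real.exp (-((NP:ℝ)*μgap^2/2))) := by
      rw [hP, Finset.card_powersetCard, Finset.card_univ, Fintype.card_fin,
        ENNReal.ofReal_mul (by positivity), ENNReal.ofReal_natCast]
    have u5 : ENNReal.ofReal ((NA.choose NP : ℝ) * Real.exp (-((NP:ℝ)*μgap^2/2)))
        ≤ ENNReal.ofReal δ :=
      ENNReal.ofReal_le_ofReal (numeric hδ0 hδ1 hNP hlt hgap)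
    exact le_trans u1 (le_trans u2 (le_trans u3.le (le_trans u4.le u5)))
  have hsubset : (⋃ S ∈ P, bad S)ᶜ ⊆ {ω | ∀ S : Finset (Fin NA), S.card = NP →
      Phibar (((1 / (NP : ℝ)) * ∑ i ∈ S, X i ω - μgap) * Real.sqrt NP) > α} := by
    intro ω hω S hS
    have hSP : S ∈ P := by rw [hP, Finset.mem_powersetCard_univ]; exact hS
    have hnot : ω ∉ bad S := fun hmem => hω (Set.mem_biUnion hSP hmem)
    have hsum : ∑ i ∈ S, X i ω < (NP:ℝ)*μgap := not_le.mp hnot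
    have hμ : (1/(NP:ℝ)) * ∑ i ∈ S, X i ω - μgap < 0 := by
      have h3 := mul_lt_mul_of_pos_left hsum (by positivity : (0:ℝ) < 1/(NP:ℝ))
      have h4 : (1/(NP:ℝ)) * ((NP:ℝ)*μgap) = μgap := by field_simp
      linarith
    have harg : ((1/(NP:ℝ)) * ∑ i ∈ S, X i ω - μgap) * Real.sqrt NP ≤ 0 := by
      nlinarith [Real.sqrt_nonneg ((NP:ℝ))]
    exact lt_of_lt_of_le hα2 (Phibar_ge_half harg)
  have hmeasU : MeasurableSet (⋃ S ∈ P, bad S) :=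
    P.measurableSet_biUnion fun S _ => hmeasbad S
  have h1 : ENNReal.ofReal (1 - δ) = 1 - ENNReal.ofReal δ := by
    rw [ENNReal.ofReal_sub 1 hδ0.le, ENNReal.ofReal_one]
  have h2 : (1:ENNReal) - ENNReal.ofReal δ ≤ 1 - ℙ (⋃ S ∈ P, bad S) :=
    tsub_le_tsub_left hunion 1
  have h3 : (1:ENNReal) - ℙ (⋃ S ∈ P, bad S) = ℙ ((⋃ S ∈ P, bad S)ᶜ) :=
    (prob_compl_eq_one_sub (μ := ℙ) hmeasU).symm
  rw [h1]
  exact le_trans h2 (le_trans h3.le (measure_mono hsubset))
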